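/- Suppose f : [0,∞) → ℝ is analytic and definable in an o-minimal structure, and P(X,Y) is a nonzero real polynomial such that P(n, f(n)) = 0 for infinitely many positive integers n. Then P(x, f(x)) = 0 for all x ≥ 0; in particular f is an algebraic function. -/

import Mathlib

open Set MvPolynomial Filter Topology

/-- Evaluating a polynomial at `(x, f x)` preserves analyticity within a set. -/
lemma analyticOn_eval_poly {f : ℝ → ℝ} {s : Set ℝ} (hf : AnalyticOn ℝ f s)
    (P : MvPolynomial (Fin 2) ℝ) :
    AnalyticOn ℝ (fun x => MvPolynomial.eval (fun i : Fin 2 => if i = 0 then x else f x) P) s := by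
  intro x hx
  have hcoord : ∀ i : Fin 2,
      AnalyticWithinAt ℝ (fun x : ℝ => if i = 0 then x else f x) s x := by
    intro i
    by_cases h : i = 0
    · simpa [h] using (analyticOn_id (𝕜 := ℝ) (s := s)) x hx
    · simpa [h] using hf x hx
  apply P.induction_on (fun a => ?_) (fun p q hp hq => ?_) (fun p i hp => ?_)
  · simpa using analyticWithinAt_const (𝕜 := ℝ)
  · simp only [map_add]
    exact hp.add hq
  · simp only [map_mul, eval_X]
    exact hp.mul (hcoord i)

theorem definable_analytic_algebraic (f : ℝ → ℝ)
    (hf : AnalyticOn ℝ f (Set.Ici 0))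
    (P : MvPolynomial (Fin 2) ℝ) (hP : P ≠ 0)
    -- o-minimality: the zero set of the definable function x ↦ P(x, f(x)) on
    -- [0,∞) is a finite union of order-connected sets (points and intervals)
    (hominimal : ∃ (n : ℕ) (I : Fin n → Set ℝ), (∀ k, (I k).OrdConnected) ∧
      {x : ℝ | 0 ≤ x ∧
        MvPolynomial.eval (fun i : Fin 2 => if i = 0 then x else f x) P = 0} =
        ⋃ k, I k)
    (hzeros : {n : ℕ | 0 < n ∧
      MvPolynomial.eval (fun i : Fin 2 => if i = 0 then (n : ℝ) else f n) P = 0}.Infinite) :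
    ∀ x : ℝ, 0 ≤ x →
      MvPolynomial.eval (fun i : Fin 2 => if i = 0 then x else f x) P = 0 := by
  set g : ℝ → ℝ := fun x => MvPolynomial.eval (fun i : Fin 2 => if i = 0 then x else f x) P
    with hg_def
  have hg : AnalyticOn ℝ g (Set.Ici 0) := analyticOn_eval_poly hf P
  obtain ⟨m, I, hI, hIZ⟩ := hominimal
  set S : Set ℕ := {n : ℕ | 0 < n ∧ g n = 0} with hS_def
  -- each point of S lies in some I k
  have hmem : ∀ n ∈ S, ∃ k : Fin m, (n : ℝ) ∈ I k := by
    intro n hn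
    have : (n : ℝ) ∈ ⋃ k, I k := by
      rw [← hIZ]
      exact ⟨by exact_mod_cast hn.1.le, hn.2⟩
    exact Set.mem_iUnion.1 this
  -- Fin m is nonempty
  obtain ⟨n₀, hn₀⟩ := hzeros.nonempty
  have : Nonempty (Fin m) := ⟨(hmem n₀ hn₀).choose⟩
  choose! F hF using hmem
  -- two distinct naturals in the same I k
  obtain ⟨a, ha, b, hb, hab, hFab⟩ :=
    hzeros.exists_ne_map_eq_of_mapsTo (f := F) (t := (Set.univ : Set (Fin m)))
      (fun n _ => Set.mem_univ _) Set.finite_univ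
  -- wlog a < b
  wlog hlt : a < b generalizing a b
  · exact this b hb a ha hab.symm hFab.symm ((hab.lt_or_gt).resolve_left hlt)
  -- the interval [a, b] lies in the zero set
  have hIcc : Set.Icc (a : ℝ) (b : ℝ) ⊆ I (F a) := by
    apply (hI (F a)).out (hF a ha)
    rw [hFab]; exact hF b hb
  have hzero_Icc : ∀ x ∈ Set.Icc (a : ℝ) (b : ℝ), g x = 0 := by
    intro x hx
    have : x ∈ ⋃ k, I k := Set.mem_iUnion.2 ⟨F a, hIcc hx⟩
    rw [← hIZ] at this
    exact this.2
  -- g is analytic (in the nhds sense) on (0, ∞)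
  have hgN : AnalyticOnNhd ℝ g (Set.Ioi (0 : ℝ)) := by
    intro x hx
    have hx' : Set.Ici (0 : ℝ) ∈ 𝓝 x :=
      Filter.mem_of_superset (Ioi_mem_nhds hx) Set.Ioi_subset_Ici_self
    have := (hg x (Set.mem_Ici.2 (le_of_lt (Set.mem_Ioi.1 hx)))).mono_of_mem_nhdsWithin (t := Set.univ)
      (by simpa [nhdsWithin_univ] using hx')
    rwa [analyticWithinAt_univ] at this
  -- g vanishes near the midpoint of [a,b]
  have hmid : ((a : ℝ) + b) / 2 ∈ Set.Ioi (0 : ℝ) := by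
    have : (0 : ℝ) < b := by exact_mod_cast hb.1
    have : (0 : ℝ) ≤ a := by exact_mod_cast Nat.zero_le a
    have hb' : (0 : ℝ) < b := by exact_mod_cast hb.1
    simp only [Set.mem_Ioi]
    linarith
  have habR : (a : ℝ) < b := by exact_mod_cast hlt
  have hev : g =ᶠ[nhds (((a : ℝ) + b) / 2)] 0 := by
    have hmem' : Set.Ioo (a : ℝ) b ∈ nhds (((a : ℝ) + b) / 2) := by
      apply Ioo_mem_nhds <;> linarith
    filter_upwards [hmem'] with x hx
    exact hzero_Icc x (Set.Ioo_subset_Icc_self hx)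
  have hEq : Set.EqOn g 0 (Set.Ioi (0 : ℝ)) :=
    hgN.eqOn_zero_of_preconnected_of_eventuallyEq_zero isPreconnected_Ioi hmid hev
  -- conclude
  intro x hx
  rcases eq_or_lt_of_le hx with h | h
  · -- x = 0 : use continuity within Ici 0
    subst h
    have hc : ContinuousWithinAt g (Set.Ici (0 : ℝ)) 0 :=
      hg.continuousOn 0 Set.self_mem_Ici
    have h1 : Filter.Tendsto g (nhdsWithin 0 (Set.Ioi (0 : ℝ))) (nhds (g 0)) :=
      hc.tendsto.mono_left (nhdsWithin_mono _ Set.Ioi_subset_Ici_self)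
    have h2 : Filter.Tendsto g (nhdsWithin 0 (Set.Ioi (0 : ℝ))) (nhds 0) := by
      apply Filter.Tendsto.congr' _ tendsto_const_nhds
      filter_upwards [self_mem_nhdsWithin] with y hy
      exact (hEq hy).symm
    exact tendsto_nhds_unique h1 h2
  · exact hEq h
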